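/- arXiv:1501.05818 — 2 statements merged into one kernel-verified Lean document; each statement's English description precedes it below -/
import Mathlib

section
/- Let S be a sparse family of dyadic cubes in a dyadic grid on ℝ^d, meaning that for each P ∈ S, the sum of |Q| over the maximal elements Q of S strictly contained in P is at most |P|/2. Then for each P ∈ S there exists a measurable subset E(P) ⊆ P with |E(P)| ≥ |P|/2 such that the sets {E(P) : P ∈ S} are pairwise disjoint. -/
open MeasureTheory

/-- The standard dyadic cube of generation `k` at position `m` in `ℝ^d`. -/
def dyadicCube (d : ℕ) (k : ℤ) (m : Fin d → ℤ) : Set (Fin d → ℝ) :=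
  {x | ∀ i, (m i : ℝ) * (2 : ℝ) ^ (-k) ≤ x i ∧ x i < ((m i : ℝ) + 1) * (2 : ℝ) ^ (-k)}

/-- `Q` is a cube of the standard dyadic grid on `ℝ^d`. -/
def IsDyadicCube {d : ℕ} (Q : Set (Fin d → ℝ)) : Prop :=
  ∃ (k : ℤ) (m : Fin d → ℤ), Q = dyadicCube d k m

/-- The `S`-children of `P`: the maximal elements of `S` strictly contained in `P`. -/
def sparseChildren {α : Type*} (S : Set (Set α)) (P : Set α) : Set (Set α) :=
  {Q | Q ∈ S ∧ Q ⊂ P ∧ ∀ R ∈ S, Q ⊆ R → R ⊂ P → R = Q}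

/-- A family of dyadic cubes is sparse if for each `P ∈ S` the `S`-children of `P`
have total measure at most `|P|/2`. -/
def IsSparse {d : ℕ} (S : Set (Set (Fin d → ℝ))) : Prop :=
  ∀ P ∈ S, ∑' Q : sparseChildren S P, volume (Q : Set (Fin d → ℝ)) ≤ volume P / 2

/-- Floor commutes with division by a positive integer. -/
lemma floor_div_int' (r : ℝ) (n : ℤ) (hn : 0 < n) : ⌊r / (n : ℝ)⌋ = ⌊r⌋ / n := by
  have hn' : (0 : ℝ) < (n : ℝ) := by exact_mod_cast hn
  rw [Int.floor_eq_iff]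
  constructor
  · rw [le_div_iff₀ hn']
    have h1 : (⌊r⌋ / n) * n ≤ ⌊r⌋ := Int.ediv_mul_le _ hn.ne'
    calc ((⌊r⌋ / n : ℤ) : ℝ) * n = (((⌊r⌋ / n) * n : ℤ) : ℝ) := by push_cast; ring
      _ ≤ (⌊r⌋ : ℝ) := by exact_mod_cast h1
      _ ≤ r := Int.floor_le r
  · rw [div_lt_iff₀ hn']
    have h2 : ⌊r⌋ < (⌊r⌋ / n + 1) * n := Int.lt_ediv_add_one_mul_self _ hn
    have h2' : (⌊r⌋ : ℝ) + 1 ≤ ((⌊r⌋ / n + 1) * n : ℤ) := by exact_mod_cast h2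
    calc r < (⌊r⌋ : ℝ) + 1 := Int.lt_floor_add_one r
      _ ≤ (((⌊r⌋ / n + 1) * n : ℤ) : ℝ) := h2'
      _ = ((⌊r⌋ / n : ℤ) + 1) * n := by push_cast; ring

lemma mem_dyadicCube_iff {d : ℕ} {k : ℤ} {m : Fin d → ℤ} {x : Fin d → ℝ} :
    x ∈ dyadicCube d k m ↔ ∀ i, ⌊x i * (2 : ℝ) ^ k⌋ = m i := by
  have hc : (0 : ℝ) < (2 : ℝ) ^ k := zpow_pos (by norm_num) k
  unfold dyadicCube
  simp only [Set.mem_setOf_eq]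
  refine forall_congr' fun i => ?_
  rw [Int.floor_eq_iff, zpow_neg, ← div_eq_mul_inv, ← div_eq_mul_inv,
    div_le_iff₀ hc, lt_div_iff₀ hc]

lemma dyadicCube_nonempty (d : ℕ) (k : ℤ) (m : Fin d → ℤ) : (dyadicCube d k m).Nonempty := by
  refine ⟨fun i => (m i : ℝ) * (2 : ℝ) ^ (-k), fun i => ⟨le_rfl, ?_⟩⟩
  have hc : (0 : ℝ) < (2 : ℝ) ^ (-k) := zpow_pos (by norm_num) _
  exact mul_lt_mul_of_pos_right (lt_add_one _) hc

/-- A finer dyadic cube meeting a coarser one is contained in it. -/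
lemma dyadicCube_subset_of_le {d : ℕ} {k1 k2 : ℤ} {m1 : Fin d → ℤ} {m2 : Fin d → ℤ}
    (h : k2 ≤ k1) {x : Fin d → ℝ} (h1 : x ∈ dyadicCube d k1 m1)
    (h2 : x ∈ dyadicCube d k2 m2) : dyadicCube d k1 m1 ⊆ dyadicCube d k2 m2 := by
  rw [mem_dyadicCube_iff] at h1 h2
  have key : ∀ y ∈ dyadicCube d k1 m1, ∀ i,
      ⌊y i * (2 : ℝ) ^ k2⌋ = m1 i / (2 : ℤ) ^ (k1 - k2).toNat := by
    intro y hy i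
    rw [mem_dyadicCube_iff] at hy
    have hn : (0 : ℤ) < (2 : ℤ) ^ (k1 - k2).toNat := by positivity
    have heq : y i * (2 : ℝ) ^ k2 = (y i * (2 : ℝ) ^ k1) / (((2 : ℤ) ^ (k1 - k2).toNat : ℤ) : ℝ) := by
      have : ((( 2 : ℤ) ^ (k1 - k2).toNat : ℤ) : ℝ) = (2 : ℝ) ^ (k1 - k2) := by
        push_cast
        rw [← zpow_natCast, Int.toNat_of_nonneg (by omega)]
      rw [this, eq_div_iff (by positivity), mul_assoc, ← zpow_add₀ (by norm_num : (2:ℝ) ≠ 0)]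
      ring_nf
    rw [heq, floor_div_int' _ _ hn, hy i]
  intro y hy
  rw [mem_dyadicCube_iff]
  intro i
  rw [key y hy i, ← key x (mem_dyadicCube_iff.mpr h1) i, h2 i]

/-- Any two dyadic cubes with a common point are nested. -/
lemma dyadicCube_nested {d : ℕ} {k1 k2 : ℤ} {m1 m2 : Fin d → ℤ} {x : Fin d → ℝ}
    (h1 : x ∈ dyadicCube d k1 m1) (h2 : x ∈ dyadicCube d k2 m2) :
    dyadicCube d k1 m1 ⊆ dyadicCube d k2 m2 ∨ dyadicCube d k2 m2 ⊆ dyadicCube d k1 m1 := by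
  rcases le_total k2 k1 with h | h
  · exact Or.inl (dyadicCube_subset_of_le h h1 h2)
  · exact Or.inr (dyadicCube_subset_of_le h h2 h1)

/-- Strict containment of dyadic cubes forces strictly finer generation. -/
lemma lt_of_dyadicCube_ssubset {d : ℕ} {k1 k2 : ℤ} {m1 m2 : Fin d → ℤ}
    (h : dyadicCube d k1 m1 ⊂ dyadicCube d k2 m2) : k2 < k1 := by
  by_contra hk
  push_neg at hk
  obtain ⟨x, hx⟩ := dyadicCube_nonempty d k1 m1
  have hx2 : x ∈ dyadicCube d k2 m2 := h.1 hx
  exact h.2 (dyadicCube_subset_of_le hk hx2 hx)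

lemma dyadicCube_eq_pi (d : ℕ) (k : ℤ) (m : Fin d → ℤ) :
    dyadicCube d k m = Set.pi Set.univ
      (fun i => Set.Ico ((m i : ℝ) * (2 : ℝ) ^ (-k)) (((m i : ℝ) + 1) * (2 : ℝ) ^ (-k))) := by
  ext x
  simp [dyadicCube, Set.mem_pi]

lemma measurableSet_dyadicCube (d : ℕ) (k : ℤ) (m : Fin d → ℤ) :
    MeasurableSet (dyadicCube d k m) := by
  rw [dyadicCube_eq_pi]
  exact MeasurableSet.univ_pi fun i => measurableSet_Ico

lemma volume_dyadicCube_lt_top (d : ℕ) (k : ℤ) (m : Fin d → ℤ) :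
    volume (dyadicCube d k m) < ⊤ := by
  rw [dyadicCube_eq_pi, volume_pi_pi]
  refine ENNReal.prod_lt_top fun i _ => ?_
  rw [Real.volume_Ico]
  exact ENNReal.ofReal_lt_top

/-- A sparse family of dyadic cubes admits pairwise disjoint measurable major
subsets `E(P) ⊆ P` with `|E(P)| ≥ |P|/2`. -/
theorem sparse_major_subsets {d : ℕ} (S : Set (Set (Fin d → ℝ)))
    (hdy : ∀ Q ∈ S, IsDyadicCube Q) (hS : IsSparse S) :
    ∃ E : Set (Fin d → ℝ) → Set (Fin d → ℝ),
      (∀ P ∈ S, E P ⊆ P ∧ MeasurableSet (E P) ∧ volume P / 2 ≤ volume (E P)) ∧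
      (∀ P ∈ S, ∀ Q ∈ S, P ≠ Q → Disjoint (E P) (E Q)) := by
  classical
  set E : Set (Fin d → ℝ) → Set (Fin d → ℝ) :=
    fun P => P \ ⋃₀ (sparseChildren S P) with hE
  have hScount : S.Countable := by
    have hsub : S ⊆ Set.range (fun p : ℤ × (Fin d → ℤ) => dyadicCube d p.1 p.2) := by
      intro Q hQ
      obtain ⟨k, m, rfl⟩ := hdy Q hQ
      exact ⟨(k, m), rfl⟩
    exact (Set.countable_range _).mono hsub
  have hchild : ∀ P, sparseChildren S P ⊆ S := fun P Q h => h.1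
  -- every strict subcube in S lies in a maximal one
  have hmax : ∀ P ∈ S, ∀ Q ∈ S, Q ⊂ P → ∃ R ∈ sparseChildren S P, Q ⊆ R := by
    intro P hP Q hQ hQP
    obtain ⟨kP, mP, hPeq⟩ := hdy P hP
    have hex : ∃ k : ℤ, ∃ m : Fin d → ℤ,
        dyadicCube d k m ∈ S ∧ Q ⊆ dyadicCube d k m ∧ dyadicCube d k m ⊂ P := by
      obtain ⟨kQ, mQ, hQeq⟩ := hdy Q hQ
      exact ⟨kQ, mQ, by rw [← hQeq]; exact hQ, by rw [← hQeq], by rw [← hQeq]; exact hQP⟩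
    have hbdd : ∃ b : ℤ, ∀ k : ℤ,
        (∃ m : Fin d → ℤ, dyadicCube d k m ∈ S ∧ Q ⊆ dyadicCube d k m ∧
          dyadicCube d k m ⊂ P) → b ≤ k := by
      refine ⟨kP + 1, fun k ⟨m, _, _, hss⟩ => ?_⟩
      have hss' : dyadicCube d k m ⊂ dyadicCube d kP mP := hPeq ▸ hss
      have := lt_of_dyadicCube_ssubset hss'
      omega
    obtain ⟨k0, ⟨m0, hm0S, hm0Q, hm0P⟩, hleast⟩ := Int.exists_least_of_bdd hbdd hex
    refine ⟨dyadicCube d k0 m0, ⟨hm0S, hm0P, ?_⟩, hm0Q⟩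
    intro R hR hsub hRP
    obtain ⟨kR, mR, hReq⟩ := hdy R hR
    subst hReq
    by_contra hne
    have hss : dyadicCube d k0 m0 ⊂ dyadicCube d kR mR :=
      hsub.ssubset_of_ne (fun h => hne h.symm)
    have h1 : kR < k0 := lt_of_dyadicCube_ssubset hss
    have h2 : k0 ≤ kR :=
      hleast kR ⟨mR, hR, hm0Q.trans hss.1, hRP⟩
    omega
  refine ⟨E, ?_, ?_⟩
  · intro P hP
    obtain ⟨kP, mP, hPeq⟩ := hdy P hP
    have hmeasP : MeasurableSet P := by rw [hPeq]; exact measurableSet_dyadicCube d kP mP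
    have hU : MeasurableSet (⋃₀ sparseChildren S P) := by
      refine MeasurableSet.sUnion (hScount.mono (hchild P)) fun Q hQ => ?_
      obtain ⟨k, m, hQeq⟩ := hdy Q (hQ.1)
      rw [hQeq]; exact measurableSet_dyadicCube d k m
    refine ⟨Set.diff_subset, hmeasP.diff hU, ?_⟩
    have hUle : volume (⋃₀ sparseChildren S P) ≤ volume P / 2 := by
      have hc := (hScount.mono (hchild P)).to_subtype
      rw [Set.sUnion_eq_iUnion]
      exact le_trans (measure_iUnion_le _) (hS P hP)
    have hsplit : volume P ≤ volume (E P) + volume P / 2 := by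
      calc volume P ≤ volume (E P ∪ ⋃₀ sparseChildren S P) := by
            refine measure_mono fun x hx => ?_
            by_cases hxU : x ∈ ⋃₀ sparseChildren S P
            · exact Or.inr hxU
            · exact Or.inl ⟨hx, hxU⟩
        _ ≤ volume (E P) + volume (⋃₀ sparseChildren S P) := measure_union_le _ _
        _ ≤ volume (E P) + volume P / 2 := add_le_add le_rfl hUle
    have hfin : volume P ≠ ⊤ := by
      rw [hPeq]; exact (volume_dyadicCube_lt_top d kP mP).ne
    have := tsub_le_iff_right.mpr hsplit
    rwa [ENNReal.sub_half hfin] at this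
  · intro P hP Q hQ hne
    rw [Set.disjoint_left]
    intro x hxP hxQ
    have hxP' : x ∈ P := hxP.1
    have hxQ' : x ∈ Q := hxQ.1
    obtain ⟨kP, mP, hPeq⟩ := hdy P hP
    obtain ⟨kQ, mQ, hQeq⟩ := hdy Q hQ
    have hnested : P ⊆ Q ∨ Q ⊆ P := by
      rw [hPeq, hQeq]
      exact dyadicCube_nested (hPeq ▸ hxP') (hQeq ▸ hxQ')
    rcases hnested with h | h
    · have hss : P ⊂ Q := h.ssubset_of_ne hne
      obtain ⟨R, hR, hPR⟩ := hmax Q hQ P hP hss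
      exact hxQ.2 ⟨R, hR, hPR hxP'⟩
    · have hss : Q ⊂ P := h.ssubset_of_ne hne.symm
      obtain ⟨R, hR, hQR⟩ := hmax P hP Q hQ hss
      exact hxP.2 ⟨R, hR, hQR hxQ'⟩
end

section
/- (Dyadic Carleson embedding / paraproduct boundedness.) Let 𝒬 be the tree of a filtered σ-finite measure space and let (b_Q)_{Q∈𝒬} satisfy Δ_Q b_Q = b_Q and the Carleson condition sup_P μ(P)^{-1} Σ_{Q ⊆ P} ‖b_Q‖_∞^2 μ(Q) ≤ 1. Then the paraproduct Πf = Σ_{Q∈𝒬} ⟨f⟩_Q b_Q is bounded on L^2(μ): ‖Πf‖_{L^2(μ)} ≤ C‖f‖_{L^2(μ)} for an absolute constant C. -/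
open MeasureTheory

/-- A filtered structure on a measure space: for each `n ∈ ℤ`, a countable partition
`part n` of `Ω` into measurable sets of finite positive measure, with `part (n+1)`
refining `part n`. -/
structure MartingaleGrid (Ω : Type*) [MeasurableSpace Ω] (μ : Measure Ω) where
  part : ℤ → Set (Set Ω)
  countable : ∀ n, (part n).Countable
  measurableSet : ∀ n, ∀ Q ∈ part n, MeasurableSet Q
  pos : ∀ n, ∀ Q ∈ part n, 0 < μ Q
  fin : ∀ n, ∀ Q ∈ part n, μ Q < ⊤
  disjoint : ∀ n, (part n).PairwiseDisjoint id
  cover : ∀ n, ⋃₀ part n = Set.univ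
  refines : ∀ n, ∀ Q ∈ part (n + 1), ∃ P ∈ part n, Q ⊆ P

variable {Ω : Type*} [MeasurableSpace Ω] {μ : MeasureTheory.Measure Ω}

/-- The tree `𝒬 = ⋃ₙ 𝒬ₙ` of all partition sets. -/
def MartingaleGrid.tree (G : MartingaleGrid Ω μ) : Set (Set Ω) :=
  ⋃ n : ℤ, G.part n

/-- The children of `P`: the maximal elements of the tree strictly contained in `P`. -/
def MartingaleGrid.children (G : MartingaleGrid Ω μ) (P : Set Ω) : Set (Set Ω) :=
  {Q | Q ∈ G.tree ∧ Q ⊂ P ∧ ∀ R ∈ G.tree, Q ⊆ R → R ⊂ P → R = Q}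

/-- The martingale difference `Δ_P f = Σ_{Q child of P} 1_Q (⟨f⟩_Q − ⟨f⟩_P)`. -/
noncomputable def MartingaleGrid.mdiff (G : MartingaleGrid Ω μ) (P : Set Ω)
    (f : Ω → ℝ) (x : Ω) : ℝ :=
  ∑' Q : G.children P,
    Set.indicator (Q : Set Ω)
      (fun _ => (⨍ y in (Q : Set Ω), f y ∂μ) - ⨍ y in P, f y ∂μ) x


open MeasureTheory Finset


/-- predecessor in a finite set of positive reals -/
noncomputable def predV (V : Finset ℝ) (v : ℝ) : ℝ :=
  (insert (0:ℝ) (V.filter (fun x => x < v))).max' (Finset.insert_nonempty _ _)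

lemma predV_nonneg (V : Finset ℝ) (v : ℝ) : 0 ≤ predV V v :=
  Finset.le_max' _ _ (Finset.mem_insert_self _ _)

lemma predV_mem (V : Finset ℝ) (v : ℝ) : predV V v = 0 ∨ predV V v ∈ V := by
  have := Finset.max'_mem (insert (0:ℝ) (V.filter (fun x => x < v))) (Finset.insert_nonempty _ _)
  rcases Finset.mem_insert.mp this with h | h
  · exact Or.inl h
  · exact Or.inr (Finset.mem_filter.mp h).1

lemma predV_lt (V : Finset ℝ) {v : ℝ} (hv : 0 < v) : predV V v < v := by
  apply (Finset.max'_lt_iff _ _).mpr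
  intro b hb
  rcases Finset.mem_insert.mp hb with h | h
  · rw [h]; exact hv
  · exact (Finset.mem_filter.mp h).2

lemma le_predV (V : Finset ℝ) {v w : ℝ} (hw : w ∈ V) (hwv : w < v) : w ≤ predV V v := by
  unfold predV
  exact Finset.le_max' _ w (Finset.mem_insert_of_mem ((Finset.mem_filter (s := V) (p := fun x => x < v)).mpr ⟨hw, hwv⟩))

lemma lt_iff_le_predV (V : Finset ℝ) (hVpos : ∀ v ∈ V, 0 < v) {v w : ℝ}
    (hv : 0 < v) (hw : w ∈ V) : w < v ↔ w ≤ predV V v :=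
  ⟨fun h => le_predV V hw h, fun h => lt_of_le_of_lt h (predV_lt V hv)⟩

/-- telescoping sum over a finite set of positive values -/
lemma telescope (V : Finset ℝ) (hVpos : ∀ v ∈ V, 0 < v) (ψ : ℝ → ℝ) (hψ0 : ψ 0 = 0) :
    ∀ u, (u = 0 ∨ u ∈ V) →
      ∑ v ∈ V.filter (· ≤ u), (ψ v - ψ (predV V v)) = ψ u := by
  classical
  have main : ∀ (N : ℕ) (u : ℝ), (V.filter (· ≤ u)).card ≤ N → (u = 0 ∨ u ∈ V) →
      ∑ v ∈ V.filter (· ≤ u), (ψ v - ψ (predV V v)) = ψ u := by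
    intro N
    induction N with
    | zero =>
      intro u hcard hu
      rcases hu with rfl | hu
      · have : V.filter (· ≤ (0:ℝ)) = ∅ := by
          apply Finset.filter_eq_empty_iff.mpr
          intro v hv h
          exact absurd h (not_le.mpr (hVpos v hv))
        rw [this, Finset.sum_empty, hψ0]
      · exfalso
        have : u ∈ V.filter (· ≤ u) := Finset.mem_filter.mpr ⟨hu, le_refl u⟩
        have := Finset.card_pos.mpr ⟨u, this⟩
        omega
    | succ N ih =>
      intro u hcard hu
      rcases hu with rfl | hu
      · have : V.filter (· ≤ (0:ℝ)) = ∅ := by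
          apply Finset.filter_eq_empty_iff.mpr
          intro v hv h
          exact absurd h (not_le.mpr (hVpos v hv))
        rw [this, Finset.sum_empty, hψ0]
      · have hu0 : 0 < u := hVpos u hu
        have hsplit : V.filter (· ≤ u) = insert u (V.filter (· ≤ predV V u)) := by
          ext w
          simp only [Finset.mem_filter, Finset.mem_insert]
          constructor
          · rintro ⟨hwV, hwu⟩
            rcases eq_or_lt_of_le hwu with h | h
            · exact Or.inl h
            · exact Or.inr ⟨hwV, le_predV V hwV h⟩
          · rintro (rfl | ⟨hwV, hwp⟩)
            · exact ⟨hu, le_refl _⟩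
            · exact ⟨hwV, le_of_lt (lt_of_le_of_lt hwp (predV_lt V hu0))⟩
        have hnot : u ∉ V.filter (· ≤ predV V u) := by
          intro hmem
          have := (Finset.mem_filter.mp hmem).2
          exact absurd (lt_of_le_of_lt this (predV_lt V hu0)) (lt_irrefl u)
        have hss : V.filter (· ≤ predV V u) ⊂ V.filter (· ≤ u) := by
          rw [hsplit]
          exact Finset.ssubset_insert hnot
        have hcard' : (V.filter (· ≤ predV V u)).card ≤ N := by
          have := Finset.card_lt_card hss
          omega
        rw [hsplit, Finset.sum_insert hnot, ih (predV V u) hcard' (predV_mem V u)]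
        ring
  exact fun u hu => main _ u (le_refl _) hu


namespace MartingaleGrid

variable (G : MartingaleGrid Ω μ)

lemma mem_tree_iff {Q : Set Ω} : Q ∈ G.tree ↔ ∃ n, Q ∈ G.part n := by
  simp [tree]

lemma nonempty_of_mem {n : ℤ} {Q : Set Ω} (hQ : Q ∈ G.part n) : Q.Nonempty := by
  rcases Set.eq_empty_or_nonempty Q with h | h
  · exfalso; have := G.pos n Q hQ; rw [h] at this; simp at this
  · exact h

/-- every cell has a superset at each coarser level -/
lemma exists_coarser {n m : ℤ} (hnm : n ≤ m) {Q : Set Ω} (hQ : Q ∈ G.part m) :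
    ∃ P ∈ G.part n, Q ⊆ P := by
  obtain ⟨k, hk⟩ : ∃ k : ℕ, m = n + k := ⟨(m - n).toNat, by omega⟩
  subst hk
  clear hnm
  induction k generalizing Q with
  | zero => exact ⟨Q, by simpa using hQ, subset_rfl⟩
  | succ k ih =>
    have : Q ∈ G.part ((n + k) + 1) := by convert hQ using 2; push_cast; ring
    obtain ⟨R, hR, hQR⟩ := G.refines (n + k) Q this
    obtain ⟨P, hP, hRP⟩ := ih hR
    exact ⟨P, hP, hQR.trans hRP⟩

lemma eq_of_mem_of_inter {n : ℤ} {P P' : Set Ω} (hP : P ∈ G.part n) (hP' : P' ∈ G.part n)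
    (h : (P ∩ P').Nonempty) : P = P' := by
  by_contra hne
  have := G.disjoint n hP hP' hne
  rcases h with ⟨x, hx1, hx2⟩
  exact absurd (Set.disjoint_left.mp (this : Disjoint P P') hx1) (by simp [hx2])

lemma subset_of_inter {n m : ℤ} (hnm : n ≤ m) {P Q : Set Ω} (hP : P ∈ G.part n)
    (hQ : Q ∈ G.part m) (h : (P ∩ Q).Nonempty) : Q ⊆ P := by
  obtain ⟨P', hP', hQP'⟩ := G.exists_coarser hnm hQ
  have : P = P' := by
    apply G.eq_of_mem_of_inter hP hP'
    rcases h with ⟨x, hx1, hx2⟩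
    exact ⟨x, hx1, hQP' hx2⟩
  rw [this]; exact hQP'

lemma tree_nested_or_disjoint {P Q : Set Ω} (hP : P ∈ G.tree) (hQ : Q ∈ G.tree)
    (h : (P ∩ Q).Nonempty) : P ⊆ Q ∨ Q ⊆ P := by
  rw [mem_tree_iff] at hP hQ
  obtain ⟨n, hP⟩ := hP; obtain ⟨m, hQ⟩ := hQ
  rcases le_total n m with hnm | hmn
  · exact Or.inr (G.subset_of_inter hnm hP hQ h)
  · exact Or.inl (G.subset_of_inter hmn hQ hP (by rwa [Set.inter_comm]))

lemma level_lt_of_ssubset {n m : ℤ} {P Q : Set Ω} (hP : P ∈ G.part n) (hQ : Q ∈ G.part m)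
    (h : Q ⊂ P) : n < m := by
  by_contra hle
  push_neg at hle
  obtain ⟨x, hx⟩ := G.nonempty_of_mem hQ
  have hsub : P ⊆ Q := G.subset_of_inter hle hQ hP ⟨x, hx, h.subset hx⟩
  exact (h.not_subset) hsub

/-- key lemma: every strict tree-subset of a tree element is contained in a child -/
lemma exists_child {P Q : Set Ω} (hP : P ∈ G.tree) (hQ : Q ∈ G.tree) (h : Q ⊂ P) :
    ∃ R ∈ G.children P, Q ⊆ R := by
  obtain ⟨n, hPn⟩ := G.mem_tree_iff.mp hP
  -- the collection of intermediate sets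
  set C : Set (Set Ω) := {R | R ∈ G.tree ∧ Q ⊆ R ∧ R ⊂ P} with hC
  have hQC : Q ∈ C := ⟨hQ, subset_rfl, h⟩
  -- levels of members of C are > n
  have hlev : ∀ R ∈ C, ∀ m : ℤ, R ∈ G.part m → n < m := by
    rintro R ⟨hRt, _, hRP⟩ m hRm
    exact G.level_lt_of_ssubset hPn hRm hRP
  -- the set of achieved levels
  have hbdd : ∃ b : ℤ, ∀ m : ℤ, (∃ R ∈ C, R ∈ G.part m) → b ≤ m := by
    exact ⟨n + 1, fun m ⟨R, hRC, hRm⟩ => (hlev R hRC m hRm)⟩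
  have hex : ∃ m : ℤ, ∃ R ∈ C, R ∈ G.part m := by
    obtain ⟨m, hm⟩ := G.mem_tree_iff.mp hQ
    exact ⟨m, Q, hQC, hm⟩
  obtain ⟨b, hb⟩ := hbdd
  obtain ⟨m₀, ⟨R₀, hR₀C, hR₀m⟩, hmin⟩ :=
    Int.exists_least_of_bdd (P := fun m => ∃ R ∈ C, R ∈ G.part m) ⟨b, hb⟩ hex
  obtain ⟨x, hx⟩ := G.nonempty_of_mem (G.mem_tree_iff.mp hQ).choose_spec
  have hxQ : x ∈ Q := hx
  -- R₀ is the maximum of C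
  have hmax : ∀ R ∈ C, R ⊆ R₀ := by
    rintro R hRC
    have hnest : R ⊆ R₀ ∨ R₀ ⊆ R :=
      G.tree_nested_or_disjoint hRC.1 hR₀C.1 ⟨x, hRC.2.1 hxQ, hR₀C.2.1 hxQ⟩
    rcases hnest with h1 | h1
    · exact h1
    rcases eq_or_ne R₀ R with rfl | hne
    · exact subset_rfl
    · -- R₀ ⊂ R contradicts minimality of level m₀
      exfalso
      obtain ⟨m, hRm⟩ := G.mem_tree_iff.mp hRC.1
      have : m < m₀ := G.level_lt_of_ssubset hRm hR₀m (ssubset_of_subset_of_ne h1 hne)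
      exact absurd (hmin m ⟨R, hRC, hRm⟩) (by omega)
  refine ⟨R₀, ⟨hR₀C.1, hR₀C.2.2, ?_⟩, hR₀C.2.1⟩
  intro S hS hRS hSP
  exact (hmax S ⟨hS, hR₀C.2.1.trans hRS, hSP⟩).antisymm hRS

lemma tree_countable : G.tree.Countable :=
  Set.countable_iUnion fun n => G.countable n

lemma measurableSet_of_tree {Q : Set Ω} (hQ : Q ∈ G.tree) : MeasurableSet Q := by
  obtain ⟨n, hn⟩ := G.mem_tree_iff.mp hQ; exact G.measurableSet n Q hn

lemma pos_of_tree {Q : Set Ω} (hQ : Q ∈ G.tree) : 0 < μ Q := by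
  obtain ⟨n, hn⟩ := G.mem_tree_iff.mp hQ; exact G.pos n Q hn

lemma fin_of_tree {Q : Set Ω} (hQ : Q ∈ G.tree) : μ Q < ⊤ := by
  obtain ⟨n, hn⟩ := G.mem_tree_iff.mp hQ; exact G.fin n Q hn

lemma nonempty_of_tree {Q : Set Ω} (hQ : Q ∈ G.tree) : Q.Nonempty := by
  obtain ⟨n, hn⟩ := G.mem_tree_iff.mp hQ; exact G.nonempty_of_mem hn

lemma children_disjoint {P R R' : Set Ω} (hR : R ∈ G.children P) (hR' : R' ∈ G.children P)
    (hne : R ≠ R') : Disjoint R R' := by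
  by_contra hdisj
  obtain ⟨x, hx1, hx2⟩ := Set.not_disjoint_iff.mp hdisj
  rcases G.tree_nested_or_disjoint hR.1 hR'.1 ⟨x, hx1, hx2⟩ with hs | hs
  · exact hne (hR.2.2 R' hR'.1 hs hR'.2.1).symm
  · exact hne (hR'.2.2 R hR.1 hs hR.2.1)

section BStruct

variable {G} {P : Set Ω} {bq : Ω → ℝ}

lemma b_eq_zero_outside (hΔ : G.mdiff P bq = bq) {x : Ω} (hx : x ∉ P) : bq x = 0 := by
  rw [← hΔ, MartingaleGrid.mdiff]
  convert tsum_zero with Q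
  exact Set.indicator_of_notMem (fun hxQ => hx (Q.2.2.1.subset hxQ)) _

lemma b_const_on_child (hΔ : G.mdiff P bq = bq) {R : Set Ω} (hR : R ∈ G.children P)
    {x : Ω} (hx : x ∈ R) :
    bq x = (⨍ y in R, bq y ∂μ) - ⨍ y in P, bq y ∂μ := by
  conv_lhs => rw [← hΔ]
  rw [MartingaleGrid.mdiff]
  rw [tsum_eq_single (⟨R, hR⟩ : G.children P)]
  · exact Set.indicator_of_mem hx _
  · intro Q hQ
    refine Set.indicator_of_notMem ?_ _
    intro hxQ
    exact Set.disjoint_left.mp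
      (G.children_disjoint Q.2 hR (fun h => hQ (Subtype.ext h))) hxQ hx

lemma b_const_on_subcell (hΔ : G.mdiff P bq = bq) (hP : P ∈ G.tree) {Q : Set Ω}
    (hQ : Q ∈ G.tree) (hQP : Q ⊂ P) :
    ∃ κ : ℝ, ∀ x ∈ Q, bq x = κ := by
  obtain ⟨R, hR, hQR⟩ := G.exists_child hP hQ hQP
  exact ⟨_, fun x hx => b_const_on_child hΔ hR (hQR hx)⟩

lemma integral_restrict_b_eq_zero (hΔ : G.mdiff P bq = bq) (hP : P ∈ G.tree) :
    ∫ y in P, bq y ∂μ = 0 := by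
  rcases Set.eq_empty_or_nonempty (G.children P) with hch | ⟨R, hR⟩
  · have hb0 : ∀ x, bq x = 0 := by
      intro x
      rw [← hΔ, MartingaleGrid.mdiff]
      have : IsEmpty (G.children P) := by rw [hch]; exact Set.isEmpty_coe_sort.mpr rfl
      exact tsum_empty
    simp [funext hb0]
  · have hRmeas : MeasurableSet R := G.measurableSet_of_tree hR.1
    have hRpos : μ R ≠ 0 := (G.pos_of_tree hR.1).ne'
    have hRfin : μ R ≠ ⊤ := (G.fin_of_tree hR.1).ne
    set c : ℝ := (⨍ y in R, bq y ∂μ) - ⨍ y in P, bq y ∂μ with hc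
    have havg : (⨍ y in R, bq y ∂μ) = c := by
      have h1 : ∫ y in R, bq y ∂μ = ∫ y in R, (fun _ => c) y ∂μ :=
        setIntegral_congr_fun hRmeas (fun x hx => b_const_on_child hΔ hR hx)
      rw [setAverage_eq, h1, setIntegral_const, smul_smul, smul_eq_mul,
        inv_mul_cancel₀ (show μ.real R ≠ 0 from ENNReal.toReal_ne_zero.mpr ⟨hRpos, hRfin⟩), one_mul]
    have havgP : (⨍ y in P, bq y ∂μ) = 0 := by
      rw [hc] at havg; linarith [havg]
    have := havgP
    rw [setAverage_eq, smul_eq_mul] at this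
    have hPpos : (μ P).toReal ≠ 0 :=
      ENNReal.toReal_ne_zero.mpr ⟨(G.pos_of_tree hP).ne', (G.fin_of_tree hP).ne⟩
    field_simp at this
    exact (div_eq_zero_iff.mp this).resolve_right hPpos

lemma integral_b_eq_zero (hΔ : G.mdiff P bq = bq) (hP : P ∈ G.tree)
    (hint : Integrable bq μ) : ∫ y, bq y ∂μ = 0 := by
  have hPmeas := G.measurableSet_of_tree hP
  rw [← integral_add_compl hPmeas hint, integral_restrict_b_eq_zero hΔ hP]
  have : ∫ y in Pᶜ, bq y ∂μ = 0 := by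
    rw [setIntegral_congr_fun hPmeas.compl (g := fun _ => (0:ℝ))
      (fun x hx => b_eq_zero_outside hΔ hx)]
    simp
  rw [this]; ring


variable {b : Set Ω → Ω → ℝ}

lemma integrable_mul_b (hint : ∀ Q ∈ G.tree, Integrable (b Q) μ)
    (hb1 : ∀ Q ∈ G.tree, ∀ᵐ x ∂μ, |b Q x| ≤ 1)
    {Q Q' : Set Ω} (hQ : Q ∈ G.tree) (hQ' : Q' ∈ G.tree) :
    Integrable (fun x => b Q x * b Q' x) μ := by
  refine Integrable.bdd_mul (c := 1) (hint Q' hQ') (hint Q hQ).aestronglyMeasurable ?_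
  filter_upwards [hb1 Q hQ] with x hx
  simpa using hx

lemma integral_b_mul_b (hint : ∀ Q ∈ G.tree, Integrable (b Q) μ)
    (hΔ : ∀ Q ∈ G.tree, G.mdiff Q (b Q) = b Q)
    {Q Q' : Set Ω} (hQ : Q ∈ G.tree) (hQ' : Q' ∈ G.tree) (hne : Q ≠ Q')
    (hb1 : ∀ Q ∈ G.tree, ∀ᵐ x ∂μ, |b Q x| ≤ 1) :
    ∫ x, b Q x * b Q' x ∂μ = 0 := by
  have key : ∀ Q Q' : Set Ω, Q ∈ G.tree → Q' ∈ G.tree → Q' ⊂ Q →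
      ∫ x, b Q x * b Q' x ∂μ = 0 := by
    intro Q Q' hQ hQ' hss
    obtain ⟨κ, hκ⟩ := b_const_on_subcell (hΔ Q hQ) hQ hQ' hss
    have hQ'meas := G.measurableSet_of_tree hQ'
    have hprod := integrable_mul_b hint hb1 hQ hQ'
    rw [← integral_add_compl hQ'meas hprod]
    have h2 : ∫ x in Q'ᶜ, b Q x * b Q' x ∂μ = 0 := by
      rw [setIntegral_congr_fun hQ'meas.compl (g := fun _ => (0:ℝ))
        (fun x hx => by rw [b_eq_zero_outside (hΔ Q' hQ') hx, mul_zero])]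
      simp
    have h1 : ∫ x in Q', b Q x * b Q' x ∂μ = κ * ∫ x in Q', b Q' x ∂μ := by
      rw [← integral_const_mul]
      exact setIntegral_congr_fun hQ'meas (fun x hx => by rw [hκ x hx])
    rw [h1, h2, integral_restrict_b_eq_zero (hΔ Q' hQ') hQ']
    ring
  rcases Set.eq_empty_or_nonempty (Q ∩ Q') with hdisj | hnon
  · have : ∀ x, b Q x * b Q' x = 0 := by
      intro x
      by_cases hx : x ∈ Q
      · have : x ∉ Q' := fun hx' => (Set.eq_empty_iff_forall_notMem.mp hdisj x) ⟨hx, hx'⟩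
        rw [b_eq_zero_outside (hΔ Q' hQ') this, mul_zero]
      · rw [b_eq_zero_outside (hΔ Q hQ) hx, zero_mul]
    rw [funext this]; simp
  · rcases G.tree_nested_or_disjoint hQ hQ' hnon with hs | hs
    · have h := key Q' Q hQ' hQ (ssubset_of_subset_of_ne hs hne)
      rw [← h]
      exact integral_congr_ae (Filter.Eventually.of_forall fun x => mul_comm _ _)
    · exact key Q Q' hQ hQ' (ssubset_of_subset_of_ne hs (Ne.symm hne))

lemma integral_sq_sum (hint : ∀ Q ∈ G.tree, Integrable (b Q) μ)
    (hΔ : ∀ Q ∈ G.tree, G.mdiff Q (b Q) = b Q)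
    (hb1 : ∀ Q ∈ G.tree, ∀ᵐ x ∂μ, |b Q x| ≤ 1)
    (F : Finset (Set Ω)) (hF : ∀ Q ∈ F, Q ∈ G.tree) (c : Set Ω → ℝ) :
    ∫ x, (∑ Q ∈ F, c Q * b Q x) ^ 2 ∂μ
      = ∑ Q ∈ F, (c Q) ^ 2 * ∫ x, (b Q x) ^ 2 ∂μ := by
  have hprod : ∀ Q ∈ F, ∀ Q' ∈ F,
      Integrable (fun x => (c Q * b Q x) * (c Q' * b Q' x)) μ := by
    intro Q hQ Q' hQ'
    have := (integrable_mul_b hint hb1 (hF Q hQ) (hF Q' hQ')).const_mul (c Q * c Q')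
    refine this.congr (Filter.Eventually.of_forall fun x => by ring)
  have expand : ∀ x, (∑ Q ∈ F, c Q * b Q x) ^ 2
      = ∑ Q ∈ F, ∑ Q' ∈ F, (c Q * b Q x) * (c Q' * b Q' x) := by
    intro x
    rw [sq, Finset.sum_mul_sum]
  rw [integral_congr_ae (Filter.Eventually.of_forall fun x => expand x)]
  rw [integral_finset_sum F (fun Q hQ => integrable_finset_sum F (fun Q' hQ' => hprod Q hQ Q' hQ'))]
  refine Finset.sum_congr rfl ?_
  intro Q hQ
  rw [integral_finset_sum F (fun Q' hQ' => hprod Q hQ Q' hQ')]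
  rw [Finset.sum_eq_single_of_mem Q hQ]
  · rw [← integral_const_mul]
    refine integral_congr_ae (Filter.Eventually.of_forall fun x => by ring)
  · intro Q' hQ' hne
    have h0 := integral_b_mul_b hint hΔ (hF Q hQ) (hF Q' hQ') (fun h => hne (h.symm)) hb1
    calc ∫ x, (c Q * b Q x) * (c Q' * b Q' x) ∂μ
        = (c Q * c Q') * ∫ x, b Q x * b Q' x ∂μ := by
          rw [← integral_const_mul]
          exact integral_congr_ae (Filter.Eventually.of_forall fun x => by ring)
      _ = 0 := by rw [h0, mul_zero]

end BStruct

end MartingaleGrid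


open MeasureTheory Finset

variable {Ω : Type*} [MeasurableSpace Ω] {μ : MeasureTheory.Measure Ω}

open scoped Classical in
lemma carleson_finite (G : MartingaleGrid Ω μ)
    (F : Finset (Set Ω)) (hF : ∀ Q ∈ F, Q ∈ G.tree)
    (a : Set Ω → ℝ) (ha : ∀ Q ∈ F, 0 ≤ a Q)
    (hpack : ∀ P ∈ F, ∑ Q ∈ F.filter (fun Q => Q ⊆ P), a Q ≤ (μ P).toReal)
    (g : Ω → ℝ) (hg : MemLp g 2 μ) (hg0 : ∀ x, 0 ≤ g x) :
    ∑ Q ∈ F, a Q * (⨍ y in Q, g y ∂μ) ^ 2 ≤ 4 * ∫ x, (g x) ^ 2 ∂μ := by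
  classical
  set t : Set Ω → ℝ := fun Q => ⨍ y in Q, g y ∂μ with ht_def
  -- integrability of g on finite-measure sets
  have hgint : ∀ Q : Set Ω, Q ∈ G.tree → IntegrableOn g Q μ := by
    intro Q hQ
    have : Fact (μ Q < ⊤) := ⟨G.fin_of_tree hQ⟩
    exact (hg.restrict Q).integrable (by norm_num)
  have ht0 : ∀ Q ∈ F, 0 ≤ t Q := by
    intro Q hQ
    exact integral_nonneg (fun x => hg0 x)
  set V : Finset ℝ := (F.image t).filter (fun v => 0 < v) with hV_def
  have hVpos : ∀ v ∈ V, 0 < v := fun v hv => (Finset.mem_filter.mp hv).2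
  have htQ : ∀ Q ∈ F, t Q = 0 ∨ t Q ∈ V := by
    intro Q hQ
    rcases eq_or_lt_of_le (ht0 Q hQ) with h | h
    · exact Or.inl h.symm
    · exact Or.inr (Finset.mem_filter.mpr ⟨Finset.mem_image_of_mem t hQ, h⟩)
  set St : ℝ → Finset (Set Ω) := fun v => F.filter (fun Q => v ≤ t Q) with hSt_def
  set Mx : ℝ → Finset (Set Ω) :=
    fun v => (St v).filter (fun M => ∀ R ∈ St v, M ⊆ R → M = R) with hMx_def
  have hMxF : ∀ v, ∀ M ∈ Mx v, M ∈ F := fun v M hM =>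
    (Finset.mem_filter.mp (Finset.mem_filter.mp hM).1).1
  have hexmax : ∀ v : ℝ, ∀ Q ∈ St v, ∃ M ∈ Mx v, Q ⊆ M := by
    intro v Q hQ
    have hfin : ((St v).filter (fun R => Q ⊆ R) : Set (Set Ω)).Finite :=
      Finset.finite_toSet _
    have hne : ((St v).filter (fun R => Q ⊆ R) : Set (Set Ω)).Nonempty :=
      ⟨Q, by simpa using Finset.mem_filter.mpr ⟨hQ, subset_rfl⟩⟩
    obtain ⟨M, hM, hMmax'⟩ := Set.Finite.exists_maximalFor id _ hfin hne
    have hMmax : ∀ R ∈ ((St v).filter (fun R => Q ⊆ R) : Set (Set Ω)), M ⊆ R → M = R :=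
      fun R hR hMR => hMR.antisymm (hMmax' hR hMR)
    simp only [Finset.coe_filter, Set.mem_setOf_eq] at hM
    refine ⟨M, ?_, hM.2⟩
    refine Finset.mem_filter.mpr ⟨hM.1, ?_⟩
    intro R hR hMR
    exact hMmax R (by simpa using Finset.mem_filter.mpr ⟨hR, hM.2.trans hMR⟩) hMR
  have hMxdisj : ∀ v : ℝ, ∀ M ∈ Mx v, ∀ M' ∈ Mx v, M ≠ M' → Disjoint M M' := by
    intro v M hM M' hM' hne
    by_contra hd
    obtain ⟨x, hx1, hx2⟩ := Set.not_disjoint_iff.mp hd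
    have hMt := hF M (hMxF v M hM)
    have hM't := hF M' (hMxF v M' hM')
    rcases G.tree_nested_or_disjoint hMt hM't ⟨x, hx1, hx2⟩ with hs | hs
    · exact hne ((Finset.mem_filter.mp hM).2 M' (Finset.mem_filter.mp hM').1 hs)
    · exact hne ((Finset.mem_filter.mp hM').2 M (Finset.mem_filter.mp hM).1 hs).symm
  set E : ℝ → Set Ω := fun v => ⋃ M ∈ Mx v, (M : Set Ω) with hE_def
  have hEmeas : ∀ v, MeasurableSet (E v) := by
    intro v
    exact Finset.measurableSet_biUnion _ (fun M hM => G.measurableSet_of_tree (hF M (hMxF v M hM)))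
  have hμE : ∀ v, μ (E v) = ∑ M ∈ Mx v, μ M := by
    intro v
    exact measure_biUnion_finset
      (fun M hM M' hM' hne => hMxdisj v M hM M' hM' hne)
      (fun M hM => G.measurableSet_of_tree (hF M (hMxF v M hM)))
  have hEfin : ∀ v, μ (E v) < ⊤ := by
    intro v
    rw [hμE v]
    exact ENNReal.sum_lt_top.mpr (fun M hM => G.fin_of_tree (hF M (hMxF v M hM)))
  have hμEtoReal : ∀ v, (μ (E v)).toReal = ∑ M ∈ Mx v, (μ M).toReal := by
    intro v
    rw [hμE v, ENNReal.toReal_sum]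
    exact fun M hM => (G.fin_of_tree (hF M (hMxF v M hM))).ne
  have hEanti : ∀ v w : ℝ, v ≤ w → E w ⊆ E v := by
    intro v w hvw x hx
    simp only [hE_def, Set.mem_iUnion] at hx ⊢
    obtain ⟨M, hM, hxM⟩ := hx
    have hMSt : M ∈ St v := by
      have := Finset.mem_filter.mp (Finset.mem_filter.mp hM).1
      exact Finset.mem_filter.mpr ⟨this.1, le_trans hvw this.2⟩
    obtain ⟨M', hM', hMM'⟩ := hexmax v M hMSt
    exact ⟨M', hM', hMM' hxM⟩
  set A : ℝ → ℝ := fun v => ∑ Q ∈ St v, a Q with hA_def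
  have hA_le : ∀ v ∈ V, A v ≤ (μ (E v)).toReal := by
    intro v hv
    have hcover : St v = (Mx v).biUnion (fun M => (St v).filter (fun Q => Q ⊆ M)) := by
      ext Q
      constructor
      · intro hQ
        obtain ⟨M, hM, hQM⟩ := hexmax v Q hQ
        exact Finset.mem_biUnion.mpr ⟨M, hM, Finset.mem_filter.mpr ⟨hQ, hQM⟩⟩
      · intro hQ
        obtain ⟨M, hM, hQM⟩ := Finset.mem_biUnion.mp hQ
        exact (Finset.mem_filter.mp hQM).1
    have hdisjfib : ∀ M ∈ Mx v, ∀ M' ∈ Mx v, M ≠ M' →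
        Disjoint ((St v).filter (fun Q => Q ⊆ M)) ((St v).filter (fun Q => Q ⊆ M')) := by
      intro M hM M' hM' hne
      rw [Finset.disjoint_left]
      intro Q hQ hQ'
      have h1 := (Finset.mem_filter.mp hQ).2
      have h2 := (Finset.mem_filter.mp hQ').2
      have hQF := (Finset.mem_filter.mp (Finset.mem_filter.mp hQ).1).1
      obtain ⟨x, hx⟩ := G.nonempty_of_tree (hF Q hQF)
      exact Set.disjoint_left.mp (hMxdisj v M hM M' hM' hne) (h1 hx) (h2 hx)
    rw [hA_def]
    simp only
    rw [hcover, Finset.sum_biUnion hdisjfib, hμEtoReal]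
    apply Finset.sum_le_sum
    intro M hM
    calc ∑ Q ∈ (St v).filter (fun Q => Q ⊆ M), a Q
        ≤ ∑ Q ∈ F.filter (fun Q => Q ⊆ M), a Q := by
          apply Finset.sum_le_sum_of_subset_of_nonneg
          · intro Q hQ
            have h1 := Finset.mem_filter.mp hQ
            exact Finset.mem_filter.mpr ⟨(Finset.mem_filter.mp h1.1).1, h1.2⟩
          · intro Q hQ _
            exact ha Q (Finset.mem_filter.mp hQ).1
      _ ≤ (μ M).toReal := hpack M (hMxF v M hM)
  -- integral of g over E v
  set I : ℝ → ℝ := fun v => ∫ x in E v, g x ∂μ with hI_def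
  have hgintE : ∀ v, IntegrableOn g (E v) μ := by
    intro v
    apply integrableOn_finset_iUnion.mpr
    intro M hM
    exact hgint M (hF M (hMxF v M hM))
  have hI_eq : ∀ v, I v = ∑ M ∈ Mx v, ∫ x in M, g x ∂μ := by
    intro v
    rw [hI_def]
    exact integral_biUnion_finset (Mx v)
      (fun M hM => G.measurableSet_of_tree (hF M (hMxF v M hM)))
      (fun M hM M' hM' hne => hMxdisj v M hM M' hM' hne)
      (fun M hM => hgint M (hF M (hMxF v M hM)))
  have hcheb : ∀ v ∈ V, v * (μ (E v)).toReal ≤ I v := by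
    intro v hv
    rw [hμEtoReal, hI_eq, Finset.mul_sum]
    apply Finset.sum_le_sum
    intro M hM
    have hMSt := (Finset.mem_filter.mp hM).1
    have hvt : v ≤ t M := (Finset.mem_filter.mp hMSt).2
    have hMtree := hF M (hMxF v M hM)
    have hμM : (0:ℝ) < (μ M).toReal :=
      ENNReal.toReal_pos (G.pos_of_tree hMtree).ne' (G.fin_of_tree hMtree).ne
    have havg : t M * (μ M).toReal = ∫ x in M, g x ∂μ := by
      rw [ht_def]
      simp only
      rw [setAverage_eq, smul_eq_mul]
      field_simp
      exact mul_div_cancel_right₀ _ hμM.ne'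
    calc v * (μ M).toReal ≤ t M * (μ M).toReal := by
          apply mul_le_mul_of_nonneg_right hvt hμM.le
      _ = ∫ x in M, g x ∂μ := havg
  set d : ℝ → ℝ := fun v => v - predV V v with hd_def
  have hd0 : ∀ v ∈ V, 0 ≤ d v := by
    intro v hv
    rw [hd_def]
    simp only [sub_nonneg]
    exact (predV_lt V (hVpos v hv)).le
  set h : Ω → ℝ := fun x => ∑ v ∈ V, d v * (E v).indicator (fun _ => (1:ℝ)) x with hh_def
  have hindint : ∀ v, Integrable ((E v).indicator (fun _ => (1:ℝ))) μ := by
    intro v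
    rw [integrable_indicator_iff (hEmeas v)]
    exact integrableOn_const (hEfin v).ne
  have hh0 : ∀ x, 0 ≤ h x := by
    intro x
    apply Finset.sum_nonneg
    intro v hv
    apply mul_nonneg (hd0 v hv)
    exact Set.indicator_nonneg (fun _ _ => zero_le_one) x
  -- ∫ g h
  have hgh : ∫ x, g x * h x ∂μ = ∑ v ∈ V, d v * I v := by
    have hptwise : ∀ x, g x * h x
        = ∑ v ∈ V, d v * ((E v).indicator g x) := by
      intro x
      rw [hh_def]
      simp only
      rw [Finset.mul_sum]
      apply Finset.sum_congr rfl
      intro v hv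
      by_cases hx : x ∈ E v
      · simp [Set.indicator_of_mem hx]; ring
      · simp [Set.indicator_of_notMem hx]
    rw [integral_congr_ae (Filter.Eventually.of_forall hptwise)]
    rw [integral_finset_sum]
    · apply Finset.sum_congr rfl
      intro v hv
      rw [integral_const_mul, integral_indicator (hEmeas v)]
    · intro v hv
      exact (((integrable_indicator_iff (hEmeas v)).mpr (hgintE v))).const_mul (d v)
  -- ∫ h^2
  have hh2 : ∫ x, h x ^ 2 ∂μ
      = ∑ v ∈ V, ∑ w ∈ V, d v * d w * (μ (E v ∩ E w)).toReal := by
    have hptwise : ∀ x, h x ^ 2 = ∑ v ∈ V, ∑ w ∈ V,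
        d v * d w * ((E v ∩ E w).indicator (fun _ => (1:ℝ)) x) := by
      intro x
      rw [hh_def]
      simp only
      rw [sq, Finset.sum_mul_sum]
      apply Finset.sum_congr rfl; intro v _
      apply Finset.sum_congr rfl; intro w _
      by_cases hxv : x ∈ E v <;> by_cases hxw : x ∈ E w <;>
        simp [Set.indicator_of_mem, Set.indicator_of_notMem, hxv, hxw,
          Set.mem_inter_iff] <;> ring
    have hintvw : ∀ v w : ℝ, Integrable
        (fun x => d v * d w * ((E v ∩ E w).indicator (fun _ => (1:ℝ)) x)) μ := by
      intro v w
      apply Integrable.const_mul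
      rw [integrable_indicator_iff ((hEmeas v).inter (hEmeas w))]
      exact integrableOn_const (lt_of_le_of_lt (measure_mono Set.inter_subset_left) (hEfin v)).ne
    rw [integral_congr_ae (Filter.Eventually.of_forall hptwise)]
    rw [integral_finset_sum _ (fun v _ => integrable_finset_sum _ (fun w _ => hintvw v w))]
    apply Finset.sum_congr rfl; intro v _
    rw [integral_finset_sum _ (fun w _ => hintvw v w)]
    apply Finset.sum_congr rfl; intro w _
    rw [integral_const_mul, integral_indicator_const _ ((hEmeas v).inter (hEmeas w))]
    simp [mul_comm, Measure.real]
  -- value set facts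
  have hψ0 : ∀ v ∈ V, 0 ≤ v ^ 2 - predV V v ^ 2 := by
    intro v hv
    have h1 : predV V v ^ 2 ≤ v ^ 2 :=
      pow_le_pow_left₀ (predV_nonneg V v) (predV_lt V (hVpos v hv)).le 2
    linarith
  have hE0 : ∀ v, (0:ℝ) ≤ (μ (E v)).toReal := fun v => ENNReal.toReal_nonneg
  set T : ℝ := ∑ v ∈ V, (v ^ 2 - predV V v ^ 2) * (μ (E v)).toReal with hT_def
  have hT0 : 0 ≤ T :=
    Finset.sum_nonneg (fun v hv => mul_nonneg (hψ0 v hv) (hE0 v))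
  -- Step 1: S ≤ T
  have tele2 := telescope V hVpos (fun z => z ^ 2) (by norm_num)
  have tele1 := telescope V hVpos (fun z => z) rfl
  have swapS : ∑ Q ∈ F, a Q * t Q ^ 2 = ∑ v ∈ V, (v ^ 2 - predV V v ^ 2) * A v := by
    calc ∑ Q ∈ F, a Q * t Q ^ 2
        = ∑ Q ∈ F, ∑ v ∈ V.filter (fun v => v ≤ t Q), a Q * (v ^ 2 - predV V v ^ 2) := by
          apply Finset.sum_congr rfl; intro Q hQ
          rw [← Finset.mul_sum, tele2 (t Q) (htQ Q hQ)]
      _ = ∑ Q ∈ F, ∑ v ∈ V, if v ≤ t Q then a Q * (v ^ 2 - predV V v ^ 2) else 0 := by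
          apply Finset.sum_congr rfl; intro Q _; rw [Finset.sum_filter]
      _ = ∑ v ∈ V, ∑ Q ∈ F, if v ≤ t Q then a Q * (v ^ 2 - predV V v ^ 2) else 0 :=
          Finset.sum_comm
      _ = ∑ v ∈ V, (v ^ 2 - predV V v ^ 2) * A v := by
          apply Finset.sum_congr rfl; intro v _
          rw [hA_def]
          simp only
          rw [hSt_def]
          simp only
          rw [Finset.sum_filter, Finset.mul_sum]
          apply Finset.sum_congr rfl; intro Q _
          by_cases hvt : v ≤ t Q
          · simp only [hvt, if_true]; ring
          · simp [hvt]
  have hS_le_T : ∑ Q ∈ F, a Q * t Q ^ 2 ≤ T := by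
    rw [swapS, hT_def]
    apply Finset.sum_le_sum
    intro v hv
    exact mul_le_mul_of_nonneg_left (hA_le v hv) (hψ0 v hv)
  -- Step 2: ∫ h² = T
  have hEcap : ∀ v w : ℝ, E v ∩ E w = E (max v w) := by
    intro v w
    rcases le_total v w with hvw | hvw
    · rw [max_eq_right hvw]
      exact Set.inter_eq_self_of_subset_right (hEanti v w hvw)
    · rw [max_eq_left hvw]
      exact Set.inter_eq_self_of_subset_left (hEanti w v hvw)
  have hfiltereq : ∀ w ∈ V, V.filter (fun v => v < w) = V.filter (fun v => v ≤ predV V w) := by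
    intro w hw
    ext v
    simp only [Finset.mem_filter]
    constructor
    · rintro ⟨hvV, hvw⟩; exact ⟨hvV, le_predV V hvV hvw⟩
    · rintro ⟨hvV, hvp⟩; exact ⟨hvV, lt_of_le_of_lt hvp (predV_lt V (hVpos w hw))⟩
  have hh2T : ∫ x, h x ^ 2 ∂μ = T := by
    rw [hh2]
    have hinner : ∀ v ∈ V, ∑ w ∈ V, d v * d w * (μ (E v ∩ E w)).toReal
        = d v * v * (μ (E v)).toReal
          + ∑ w ∈ V, (if ¬ w ≤ v then d v * d w * (μ (E w)).toReal else 0) := by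
      intro v hv
      rw [← Finset.sum_filter_add_sum_filter_not V (fun w => w ≤ v)]
      congr 1
      · have : ∀ w ∈ V.filter (fun w => w ≤ v), d v * d w * (μ (E v ∩ E w)).toReal
            = d v * ((μ (E v)).toReal * d w) := by
          intro w hw
          have hwv := (Finset.mem_filter.mp hw).2
          rw [hEcap, max_eq_left hwv]; ring
        rw [Finset.sum_congr rfl this, ← Finset.mul_sum, ← Finset.mul_sum]
        rw [tele1 v (Or.inr hv)]
        ring
      · rw [Finset.sum_filter]
        apply Finset.sum_congr rfl
        intro w hw
        by_cases hwv : w ≤ v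
        · simp [hwv]
        · have hvw : v ≤ w := (not_le.mp hwv).le
          simp only [hwv, not_false_iff, if_true, hEcap, max_eq_right hvw]
    rw [Finset.sum_congr rfl hinner, Finset.sum_add_distrib]
    have hsecond : ∑ v ∈ V, ∑ w ∈ V, (if ¬ w ≤ v then d v * d w * (μ (E w)).toReal else 0)
        = ∑ w ∈ V, d w * predV V w * (μ (E w)).toReal := by
      rw [Finset.sum_comm]
      apply Finset.sum_congr rfl
      intro w hw
      have : ∀ v ∈ V, (if ¬ w ≤ v then d v * d w * (μ (E w)).toReal else 0)
          = if v < w then d v * d w * (μ (E w)).toReal else 0 := by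
        intro v _
        by_cases hvw : v < w
        · have : ¬ w ≤ v := not_le.mpr hvw
          simp [this, hvw]
        · have : w ≤ v := not_lt.mp hvw
          simp [this, hvw]
      rw [Finset.sum_congr rfl this, ← Finset.sum_filter, hfiltereq w hw]
      have : ∀ v ∈ V.filter (fun v => v ≤ predV V w),
          d v * d w * (μ (E w)).toReal = (d w * (μ (E w)).toReal) * d v := by
        intro v _; ring
      rw [Finset.sum_congr rfl this, ← Finset.mul_sum, tele1 (predV V w) (predV_mem V w)]
      ring
    rw [hsecond, hT_def, ← Finset.sum_add_distrib]
    apply Finset.sum_congr rfl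
    intro v _
    rw [hd_def]
    simp only
    ring
  -- Step 3: T ≤ 2 ∫ g h
  have hT_le : T ≤ 2 * ∫ x, g x * h x ∂μ := by
    rw [hgh, hT_def, Finset.mul_sum]
    apply Finset.sum_le_sum
    intro v hv
    have h1 : (v ^ 2 - predV V v ^ 2) * (μ (E v)).toReal
        = d v * (v + predV V v) * (μ (E v)).toReal := by
      rw [hd_def]; ring
    have h2 : d v * (v + predV V v) * (μ (E v)).toReal
        ≤ d v * (2 * v) * (μ (E v)).toReal := by
      apply mul_le_mul_of_nonneg_right _ (hE0 v)
      apply mul_le_mul_of_nonneg_left _ (hd0 v hv)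
      have := predV_lt V (hVpos v hv)
      linarith
    have h3 : d v * (2 * v) * (μ (E v)).toReal ≤ 2 * (d v * I v) := by
      have := hcheb v hv
      have hdv := hd0 v hv
      calc d v * (2 * v) * (μ (E v)).toReal = 2 * (d v * (v * (μ (E v)).toReal)) := by ring
        _ ≤ 2 * (d v * I v) := by
            apply mul_le_mul_of_nonneg_left _ (by norm_num)
            exact mul_le_mul_of_nonneg_left this hdv
    linarith
  -- Step 4: Hölder
  have hhmem : MemLp h 2 μ := by
    rw [hh_def]
    apply memLp_finset_sum V
    intro v _
    exact (memLp_indicator_const 2 (hEmeas v) (1:ℝ) (Or.inr (hEfin v).ne)).const_mul (d v)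
  have hconj : Real.HolderConjugate 2 2 := Real.HolderConjugate.two_two
  have hof2 : ENNReal.ofReal (2:ℝ) = 2 := by
    rw [ENNReal.ofReal_ofNat]
  have hholder := integral_mul_le_Lp_mul_Lq_of_nonneg hconj
    (Filter.Eventually.of_forall hg0) (Filter.Eventually.of_forall hh0)
    (by rw [hof2]; exact hg) (by rw [hof2]; exact hhmem)
  have hrpow : ∀ u : Ω → ℝ, ∫ x, u x ^ (2:ℝ) ∂μ = ∫ x, u x ^ 2 ∂μ := by
    intro u
    apply integral_congr_ae
    apply Filter.Eventually.of_forall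
    intro x
    exact Real.rpow_two (u x)
  rw [hrpow g, hrpow h, hh2T] at hholder
  have hgsq0 : 0 ≤ ∫ x, g x ^ 2 ∂μ := integral_nonneg (fun x => sq_nonneg _)
  have hsq1 : (∫ x, g x ^ 2 ∂μ) ^ (1/(2:ℝ)) = Real.sqrt (∫ x, g x ^ 2 ∂μ) :=
    (Real.sqrt_eq_rpow _).symm
  have hsq2 : T ^ (1/(2:ℝ)) = Real.sqrt T := (Real.sqrt_eq_rpow _).symm
  rw [hsq1, hsq2] at hholder
  -- Step 5: conclude
  set x := Real.sqrt T with hx_def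
  set y := Real.sqrt (∫ x, g x ^ 2 ∂μ) with hy_def
  have hx2 : x ^ 2 = T := Real.sq_sqrt hT0
  have hy2 : y ^ 2 = ∫ x, g x ^ 2 ∂μ := Real.sq_sqrt hgsq0
  have hx0 : 0 ≤ x := Real.sqrt_nonneg _
  have hy0 : 0 ≤ y := Real.sqrt_nonneg _
  have hkey : x ^ 2 ≤ 2 * (y * x) := by
    rw [hx2]
    calc T ≤ 2 * ∫ x, g x * h x ∂μ := hT_le
      _ ≤ 2 * (y * x) := by
          apply mul_le_mul_of_nonneg_left hholder (by norm_num)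
  have hfinal : x ^ 2 ≤ 4 * y ^ 2 := by
    nlinarith [sq_nonneg (x - 2*y), mul_nonneg hx0 hy0]
  calc ∑ Q ∈ F, a Q * t Q ^ 2 ≤ T := hS_le_T
    _ = x ^ 2 := hx2.symm
    _ ≤ 4 * y ^ 2 := hfinal
    _ = 4 * ∫ x, g x ^ 2 ∂μ := by rw [hy2]


open MeasureTheory
open scoped ENNReal NNReal

variable {Ω' : Type*} [MeasurableSpace Ω'] {ν : MeasureTheory.Measure Ω'}

lemma l2_bridge {u : Ω' → ℝ} (hu : MemLp u 2 ν) :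
    eLpNorm u 2 ν = ENNReal.ofReal (Real.sqrt (∫ x, u x ^ 2 ∂ν)) := by
  have hI0 : 0 ≤ ∫ x, u x ^ 2 ∂ν := integral_nonneg (fun x => sq_nonneg _)
  rw [eLpNorm_eq_lintegral_rpow_enorm_toReal (by norm_num) (by norm_num)]
  have htwo : (2:ℝ≥0∞).toReal = (2:ℝ) := by norm_num
  rw [htwo]
  have h1 : ∫⁻ x, ‖u x‖ₑ ^ (2:ℝ) ∂ν = ENNReal.ofReal (∫ x, u x ^ 2 ∂ν) := by
    rw [ofReal_integral_eq_lintegral_ofReal hu.integrable_sq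
      (Filter.Eventually.of_forall fun x => sq_nonneg _)]
    apply lintegral_congr
    intro x
    rw [ENNReal.rpow_two, ← ofReal_norm, ← ENNReal.ofReal_pow (norm_nonneg _)]
    congr 1
    rw [Real.norm_eq_abs, sq_abs]
  rw [h1, ENNReal.ofReal_rpow_of_nonneg hI0 (by norm_num), Real.sqrt_eq_rpow]


open Filter Topology

/-- Dyadic paraproduct boundedness: if `Δ_Q b_Q = b_Q` and the Carleson condition
`sup_P μ(P)⁻¹ Σ_{Q ⊆ P} ‖b_Q‖_∞² μ(Q) ≤ 1` holds, then
`Πf = Σ_Q ⟨f⟩_Q b_Q` is bounded on `L²(μ)` with an absolute constant. -/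
theorem paraproduct_L2_bound :
    ∃ C : ℝ, 0 < C ∧
      ∀ (Ω : Type) (_ : MeasurableSpace Ω) (μ : Measure Ω), SigmaFinite μ →
        ∀ (G : MartingaleGrid Ω μ) (b : Set Ω → Ω → ℝ),
          (∀ Q ∈ G.tree, Integrable (b Q) μ) →
          (∀ Q ∈ G.tree, G.mdiff Q (b Q) = b Q) →
          (∀ P ∈ G.tree,
            ∑' Q : {Q | Q ∈ G.tree ∧ Q ⊆ P},
              (eLpNorm (b Q.1) ⊤ μ) ^ 2 * μ (Q.1 : Set Ω) ≤ μ P) →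
          ∀ f : Ω → ℝ, MemLp f 2 μ →
            eLpNorm (fun x => ∑' Q : G.tree, (⨍ y in (Q : Set Ω), f y ∂μ) * b Q x) 2 μ
              ≤ ENNReal.ofReal C * eLpNorm f 2 μ := by
  classical
  refine ⟨2, by norm_num, ?_⟩
  intro Ω mΩ μ hσ G b hint hΔ hC f hf
  by_cases htree : G.tree = ∅
  · have : IsEmpty (↥G.tree) := Set.isEmpty_coe_sort.mpr htree
    have h0 : (fun x => ∑' Q : G.tree, (⨍ y in (Q : Set Ω), f y ∂μ) * b Q x)
        = fun _ => (0:ℝ) := by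
      funext x; exact tsum_empty
    rw [h0, eLpNorm_zero']
    exact zero_le
  have hne : G.tree.Nonempty := Set.nonempty_iff_ne_empty.mpr htree
  have hcnt : Countable (↥G.tree) := G.tree_countable.to_subtype
  have hnemp : Nonempty (↥G.tree) := Set.nonempty_coe_sort.mpr hne
  obtain ⟨e, he⟩ := exists_surjective_nat (↥G.tree)
  -- L∞ bound on b Q
  have hb_le_one : ∀ Q ∈ G.tree, eLpNorm (b Q) ⊤ μ ≤ 1 := by
    intro Q hQ
    by_contra hgt
    push_neg at hgt
    have hterm : (eLpNorm (b Q) ⊤ μ) ^ 2 * μ Q ≤ μ Q := by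
      refine le_trans ?_ (hC Q hQ)
      exact ENNReal.le_tsum (⟨Q, hQ, subset_rfl⟩ : {R | R ∈ G.tree ∧ R ⊆ Q})
    have h1 : μ Q < (eLpNorm (b Q) ⊤ μ) ^ 2 * μ Q := by
      conv_lhs => rw [← one_mul (μ Q)]
      exact ENNReal.mul_lt_mul_left (G.pos_of_tree hQ).ne' (G.fin_of_tree hQ).ne
        (one_lt_pow' hgt (by norm_num))
    exact absurd (lt_of_lt_of_le h1 hterm) (lt_irrefl _)
  have hb1 : ∀ Q ∈ G.tree, ∀ᵐ x ∂μ, |b Q x| ≤ 1 := by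
    intro Q hQ
    filter_upwards [ae_le_eLpNormEssSup (f := b Q) (μ := μ)] with x hx
    have h2 : (‖b Q x‖₊ : ℝ≥0∞) ≤ 1 := by
      refine le_trans (by exact_mod_cast hx) ?_
      rw [← eLpNorm_exponent_top]
      exact hb_le_one Q hQ
    have h3 : ‖b Q x‖₊ ≤ 1 := by exact_mod_cast h2
    rw [← Real.norm_eq_abs]
    exact_mod_cast h3
  -- squares of b
  have hsqint : ∀ Q ∈ G.tree, Integrable (fun x => (b Q x) ^ 2) μ := by
    intro Q hQ
    have h := Integrable.bdd_mul (c := 1) (hint Q hQ)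
      (hint Q hQ).aestronglyMeasurable
      (by filter_upwards [hb1 Q hQ] with x hx; simpa using hx)
    exact h.congr (Filter.Eventually.of_forall fun x => (sq (b Q x)).symm)
  set aQ : Set Ω → ℝ := fun Q => ((eLpNorm (b Q) ⊤ μ) ^ 2 * μ Q).toReal with haQ_def
  have haQ0 : ∀ Q, 0 ≤ aQ Q := fun Q => ENNReal.toReal_nonneg
  have hsqbound : ∀ Q ∈ G.tree, ∫ x, (b Q x) ^ 2 ∂μ ≤ aQ Q := by
    intro Q hQ
    set β : ℝ := (eLpNorm (b Q) ⊤ μ).toReal with hβ_def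
    have hβ0 : 0 ≤ β := ENNReal.toReal_nonneg
    have hbβ : ∀ᵐ x ∂μ, |b Q x| ≤ β := by
      filter_upwards [ae_le_eLpNormEssSup (f := b Q) (μ := μ)] with x hx
      have hfin : eLpNormEssSup (b Q) μ ≠ ⊤ := by
        rw [← eLpNorm_exponent_top]
        exact (lt_of_le_of_lt (hb_le_one Q hQ) (by norm_num)).ne
      have := ENNReal.toReal_mono hfin hx
      rw [← Real.norm_eq_abs]
      simpa [hβ_def, eLpNorm_exponent_top] using this
    have hindint : Integrable (Q.indicator (fun _ => β ^ 2)) μ := by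
      rw [integrable_indicator_iff (G.measurableSet_of_tree hQ)]
      exact integrableOn_const (G.fin_of_tree hQ).ne
    have hmono : ∀ᵐ x ∂μ, (b Q x) ^ 2 ≤ Q.indicator (fun _ => β ^ 2) x := by
      filter_upwards [hbβ] with x hx
      by_cases hxQ : x ∈ Q
      · rw [Set.indicator_of_mem hxQ]
        calc (b Q x) ^ 2 = |b Q x| ^ 2 := (sq_abs _).symm
          _ ≤ β ^ 2 := pow_le_pow_left₀ (abs_nonneg _) hx 2
      · rw [Set.indicator_of_notMem hxQ, MartingaleGrid.b_eq_zero_outside (hΔ Q hQ) hxQ]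
        norm_num
    calc ∫ x, (b Q x) ^ 2 ∂μ ≤ ∫ x, Q.indicator (fun _ => β ^ 2) x ∂μ :=
          integral_mono_ae (hsqint Q hQ) hindint hmono
      _ = β ^ 2 * (μ Q).toReal := by
          rw [integral_indicator_const _ (G.measurableSet_of_tree hQ)]
          rw [smul_eq_mul]; exact mul_comm _ _
      _ = aQ Q := by
          simp only [haQ_def, ENNReal.toReal_mul, ENNReal.toReal_pow, hβ_def]
          try ring
  have hbmem : ∀ Q ∈ G.tree, MemLp (b Q) 2 μ := fun Q hQ =>
    (memLp_two_iff_integrable_sq (hint Q hQ).aestronglyMeasurable).mpr (hsqint Q hQ)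
  -- averages
  set c : Set Ω → ℝ := fun Q => ⨍ y in Q, f y ∂μ with hc_def
  set g : Ω → ℝ := fun x => ‖f x‖ with hg_def
  have hg : MemLp g 2 μ := hf.norm
  have hg0 : ∀ x, 0 ≤ g x := fun x => norm_nonneg _
  have hgsq : ∫ x, g x ^ 2 ∂μ = ∫ x, f x ^ 2 ∂μ := by
    apply integral_congr_ae
    apply Filter.Eventually.of_forall
    intro x
    rw [hg_def]
    simp only
    rw [Real.norm_eq_abs, sq_abs]
  have habs : ∀ Q : Set Ω, |c Q| ≤ ⨍ y in Q, g y ∂μ := by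
    intro Q
    rw [hc_def]
    simp only
    rw [setAverage_eq, setAverage_eq, smul_eq_mul, smul_eq_mul, abs_mul,
      abs_of_nonneg (inv_nonneg.mpr (show 0 ≤ μ.real Q from ENNReal.toReal_nonneg))]
    apply mul_le_mul_of_nonneg_left _ (inv_nonneg.mpr ENNReal.toReal_nonneg)
    have := norm_integral_le_integral_norm (μ := μ.restrict Q) f
    rw [Real.norm_eq_abs] at this
    exact this
  -- the key L² bound for finite partial sums
  have key : ∀ F : Finset (Set Ω), (∀ Q ∈ F, Q ∈ G.tree) →
      ∫ x, (∑ Q ∈ F, c Q * b Q x) ^ 2 ∂μ ≤ 4 * ∫ x, f x ^ 2 ∂μ := by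
    intro F hF
    have hpack : ∀ P ∈ F, ∑ Q ∈ F.filter (fun Q => Q ⊆ P), aQ Q ≤ (μ P).toReal := by
      intro P hP
      have hPt := hF P hP
      have hsub : ∑ Q ∈ F.filter (fun Q => Q ⊆ P), ((eLpNorm (b Q) ⊤ μ) ^ 2 * μ Q) ≤ μ P := by
        refine le_trans ?_ (hC P hPt)
        set s := F.filter (fun Q => Q ⊆ P) with hs_def
        have hmem : ∀ Q ∈ s, Q ∈ G.tree ∧ Q ⊆ P := fun Q hQ =>
          ⟨hF Q (Finset.mem_filter.mp hQ).1, (Finset.mem_filter.mp hQ).2⟩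
        calc ∑ Q ∈ s, ((eLpNorm (b Q) ⊤ μ) ^ 2 * μ Q)
            = ∑ q ∈ s.attach, ((eLpNorm (b q.1) ⊤ μ) ^ 2 * μ q.1) :=
              (Finset.sum_attach s (fun Q => (eLpNorm (b Q) ⊤ μ) ^ 2 * μ Q)).symm
          _ = ∑ q ∈ s.attach.image
                (fun q => (⟨q.1, hmem q.1 q.2⟩ : {Q | Q ∈ G.tree ∧ Q ⊆ P})),
                ((eLpNorm (b q.1) ⊤ μ) ^ 2 * μ q.1) := by
              rw [Finset.sum_image]
              intro x hx y hy hxy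
              have hval : (x : Set Ω) = (y : Set Ω) := by injection hxy
              exact Subtype.ext hval
          _ ≤ ∑' (q : {Q | Q ∈ G.tree ∧ Q ⊆ P}), ((eLpNorm (b q.1) ⊤ μ) ^ 2 * μ q.1) :=
              ENNReal.sum_le_tsum _
      have hfin : ∀ Q ∈ F.filter (fun Q => Q ⊆ P),
          (eLpNorm (b Q) ⊤ μ) ^ 2 * μ Q ≠ ⊤ := by
        intro Q hQ
        have hQt := hF Q (Finset.mem_filter.mp hQ).1
        exact ENNReal.mul_ne_top
          (ENNReal.pow_ne_top (lt_of_le_of_lt (hb_le_one Q hQt) (by norm_num)).ne)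
          (G.fin_of_tree hQt).ne
      calc ∑ Q ∈ F.filter (fun Q => Q ⊆ P), aQ Q
          = (∑ Q ∈ F.filter (fun Q => Q ⊆ P), ((eLpNorm (b Q) ⊤ μ) ^ 2 * μ Q)).toReal :=
            (ENNReal.toReal_sum hfin).symm
        _ ≤ (μ P).toReal := ENNReal.toReal_mono (G.fin_of_tree hPt).ne hsub
    rw [MartingaleGrid.integral_sq_sum hint hΔ hb1 F hF c]
    calc ∑ Q ∈ F, (c Q) ^ 2 * ∫ x, (b Q x) ^ 2 ∂μ
        ≤ ∑ Q ∈ F, aQ Q * (⨍ y in Q, g y ∂μ) ^ 2 := by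
          apply Finset.sum_le_sum
          intro Q hQ
          have h1 : (c Q) ^ 2 * ∫ x, (b Q x) ^ 2 ∂μ ≤ (c Q) ^ 2 * aQ Q :=
            mul_le_mul_of_nonneg_left (hsqbound Q (hF Q hQ)) (sq_nonneg _)
          have h2 : (c Q) ^ 2 ≤ (⨍ y in Q, g y ∂μ) ^ 2 := by
            rw [← sq_abs (c Q)]
            apply pow_le_pow_left₀ (abs_nonneg _) (habs Q) 2
          calc (c Q) ^ 2 * ∫ x, (b Q x) ^ 2 ∂μ ≤ (c Q) ^ 2 * aQ Q := h1
            _ ≤ (⨍ y in Q, g y ∂μ) ^ 2 * aQ Q :=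
              mul_le_mul_of_nonneg_right h2 (haQ0 Q)
            _ = aQ Q * (⨍ y in Q, g y ∂μ) ^ 2 := by ring
      _ ≤ 4 * ∫ x, g x ^ 2 ∂μ :=
          carleson_finite G F hF aQ (fun Q _ => haQ0 Q) hpack g hg hg0
      _ = 4 * ∫ x, f x ^ 2 ∂μ := by rw [hgsq]
  -- measurable representatives
  set b' : Set Ω → Ω → ℝ :=
    fun Q => if h : AEStronglyMeasurable (b Q) μ then h.mk (b Q) else b Q with hb'_def
  have hb'sm : ∀ Q ∈ G.tree, StronglyMeasurable (b' Q) := by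
    intro Q hQ
    have h : AEStronglyMeasurable (b Q) μ := (hint Q hQ).aestronglyMeasurable
    rw [hb'_def]
    simp only [dif_pos h]
    exact h.stronglyMeasurable_mk
  have hb'ae : ∀ Q ∈ G.tree, b Q =ᵐ[μ] b' Q := by
    intro Q hQ
    have h : AEStronglyMeasurable (b Q) μ := (hint Q hQ).aestronglyMeasurable
    rw [hb'_def]
    simp only [dif_pos h]
    exact h.ae_eq_mk
  set u : ↥G.tree → Ω → ℝ := fun Q x => c Q.1 * b' Q.1 x with hu_def
  have husm : ∀ Q : ↥G.tree, StronglyMeasurable (u Q) :=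
    fun Q => stronglyMeasurable_const.mul (hb'sm Q.1 Q.2)
  set Smb : Set Ω := {x | (∑' Q : ↥G.tree, (‖u Q x‖₊ : ℝ≥0∞)) ≠ ⊤} with hSmb_def
  have hSmb_meas : MeasurableSet Smb := by
    have hm : Measurable fun x => ∑' Q : ↥G.tree, (‖u Q x‖₊ : ℝ≥0∞) :=
      Measurable.ennreal_tsum (fun Q => (husm Q).measurable.nnnorm.coe_nnreal_ennreal)
    exact (hm (measurableSet_singleton ⊤)).compl
  set Fn : ℕ → Finset ↥G.tree := fun n => (Finset.range n).image e with hFn_def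
  have hFnmono : Monotone Fn := fun m n hmn =>
    Finset.image_subset_image (Finset.range_subset_range.mpr hmn)
  have hFncover : ∀ Q : ↥G.tree, ∃ n, Q ∈ Fn n := by
    intro Q
    obtain ⟨k, hk⟩ := he Q
    exact ⟨k + 1, Finset.mem_image.mpr ⟨k, Finset.mem_range.mpr (by omega), hk⟩⟩
  set sn : ℕ → Ω → ℝ := fun n x => ∑ Q ∈ Fn n, u Q x with hsn_def
  set hn : ℕ → Ω → ℝ := fun n => Smb.indicator (sn n) with hhn_def
  have hhnsm : ∀ n, AEStronglyMeasurable (hn n) μ := by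
    intro n
    have hsm : StronglyMeasurable (sn n) := by
      apply Measurable.stronglyMeasurable
      exact Finset.measurable_sum _ (fun Q _ => (husm Q).measurable)
    exact (hsm.indicator hSmb_meas).aestronglyMeasurable
  -- uniform norm bound
  have hbound : ∀ n, eLpNorm (hn n) 2 μ ≤ ENNReal.ofReal 2 * eLpNorm f 2 μ := by
    intro n
    have h1 : eLpNorm (hn n) 2 μ ≤ eLpNorm (sn n) 2 μ := by
      apply eLpNorm_mono
      intro x
      rw [hhn_def]
      exact norm_indicator_le_norm_self _ _
    set F' : Finset (Set Ω) := (Fn n).image Subtype.val with hF'_def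
    have hF' : ∀ Q ∈ F', Q ∈ G.tree := by
      intro Q hQ
      obtain ⟨q, _, rfl⟩ := Finset.mem_image.mp hQ
      exact q.2
    have hval_inj : ∀ x ∈ Fn n, ∀ y ∈ Fn n,
        (Subtype.val x : Set Ω) = Subtype.val y → x = y :=
      fun x _ y _ h => Subtype.ext h
    have h2 : sn n =ᵐ[μ] fun x => ∑ Q ∈ F', c Q * b Q x := by
      have haeF : ∀ᵐ x ∂μ, ∀ Q ∈ F', b Q x = b' Q x :=
        (ae_ball_iff F'.countable_toSet).mpr (fun Q hQ => hb'ae Q (hF' Q hQ))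
      filter_upwards [haeF] with x hx
      rw [hsn_def]
      simp only
      rw [hF'_def, Finset.sum_image hval_inj]
      apply Finset.sum_congr rfl
      intro q hq
      rw [hu_def]
      simp only
      rw [hx q.1 (Finset.mem_image_of_mem _ hq)]
    have hmemF : MemLp (fun x => ∑ Q ∈ F', c Q * b Q x) 2 μ := by
      apply memLp_finset_sum F'
      intro Q hQ
      exact (hbmem Q (hF' Q hQ)).const_mul (c Q)
    have h3 : eLpNorm (sn n) 2 μ = eLpNorm (fun x => ∑ Q ∈ F', c Q * b Q x) 2 μ :=
      eLpNorm_congr_ae h2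
    have h4 := key F' hF'
    have hIf0 : 0 ≤ ∫ x, f x ^ 2 ∂μ := integral_nonneg (fun x => sq_nonneg _)
    calc eLpNorm (hn n) 2 μ ≤ eLpNorm (sn n) 2 μ := h1
      _ = eLpNorm (fun x => ∑ Q ∈ F', c Q * b Q x) 2 μ := h3
      _ = ENNReal.ofReal (Real.sqrt (∫ x, (∑ Q ∈ F', c Q * b Q x) ^ 2 ∂μ)) :=
          l2_bridge hmemF
      _ ≤ ENNReal.ofReal (Real.sqrt (4 * ∫ x, f x ^ 2 ∂μ)) :=
          ENNReal.ofReal_le_ofReal (Real.sqrt_le_sqrt h4)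
      _ = ENNReal.ofReal (2 * Real.sqrt (∫ x, f x ^ 2 ∂μ)) := by
          congr 1
          rw [show (4:ℝ) * ∫ x, f x ^ 2 ∂μ = 2^2 * ∫ x, f x ^ 2 ∂μ by ring,
            Real.sqrt_mul (sq_nonneg 2), Real.sqrt_sq (by norm_num : (0:ℝ) ≤ 2)]
      _ = ENNReal.ofReal 2 * ENNReal.ofReal (Real.sqrt (∫ x, f x ^ 2 ∂μ)) :=
          ENNReal.ofReal_mul (by norm_num)
      _ = ENNReal.ofReal 2 * eLpNorm f 2 μ := by rw [l2_bridge hf]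
  -- a.e. convergence
  have hlim : ∀ᵐ x ∂μ, Tendsto (fun n => hn n x) atTop
      (𝓝 (∑' Q : G.tree, c Q.1 * b Q.1 x)) := by
    have hae_all : ∀ᵐ x ∂μ, ∀ Q : ↥G.tree, b Q.1 x = b' Q.1 x :=
      ae_all_iff.mpr (fun Q => hb'ae Q.1 Q.2)
    filter_upwards [hae_all] with x hx
    have hux : ∀ Q : ↥G.tree, u Q x = c Q.1 * b Q.1 x := by
      intro Q
      rw [hu_def]
      simp only
      rw [hx Q]
    by_cases hxS : x ∈ Smb
    · have h1 : Summable (fun Q : ↥G.tree => (‖u Q x‖₊ : ℝ≥0)) :=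
        ENNReal.tsum_coe_ne_top_iff_summable.mp hxS
      have h2 : Summable (fun Q : ↥G.tree => ‖u Q x‖) := by
        have := NNReal.summable_coe.mpr h1
        simpa [coe_nnnorm] using this
      have hsum : Summable (fun Q : ↥G.tree => u Q x) := summable_norm_iff.mp h2
      have htends : Tendsto (fun n => sn n x) atTop (𝓝 (∑' Q : ↥G.tree, u Q x)) :=
        hsum.hasSum.comp (tendsto_atTop_finset_of_monotone hFnmono hFncover)
      have hval : (∑' Q : ↥G.tree, u Q x) = ∑' Q : G.tree, c Q.1 * b Q.1 x :=
        tsum_congr hux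
      have hxind : ∀ n, hn n x = sn n x := fun n => Set.indicator_of_mem hxS _
      rw [← hval]
      simp only [hxind]
      exact htends
    · have h1 : ∀ n, hn n x = 0 := fun n => Set.indicator_of_notMem hxS _
      have h2 : ¬ Summable (fun Q : ↥G.tree => c Q.1 * b Q.1 x) := by
        intro hs
        apply hxS
        have hs' : Summable (fun Q : ↥G.tree => u Q x) :=
          hs.congr (fun Q => (hux Q).symm)
        have hs'' : Summable (fun Q : ↥G.tree => ‖u Q x‖) := summable_norm_iff.mpr hs'
        have hs3 : Summable (fun Q : ↥G.tree => ‖u Q x‖₊) := by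
          rw [← NNReal.summable_coe]
          simpa [coe_nnnorm] using hs''
        rw [hSmb_def]
        exact ENNReal.tsum_coe_ne_top_iff_summable.mpr hs3
      have h3 : (∑' Q : G.tree, c Q.1 * b Q.1 x) = 0 := tsum_eq_zero_of_not_summable h2
      rw [h3]
      simp only [h1]
      exact tendsto_const_nhds
  have hFatou := MeasureTheory.Lp.eLpNorm_lim_le_liminf_eLpNorm (p := 2) hhnsm
    (fun x => ∑' Q : G.tree, c Q.1 * b Q.1 x) hlim
  refine le_trans hFatou ?_
  calc atTop.liminf (fun n => eLpNorm (hn n) 2 μ)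
      ≤ atTop.liminf (fun _ => ENNReal.ofReal 2 * eLpNorm f 2 μ) :=
        Filter.liminf_le_liminf (Filter.Eventually.of_forall hbound)
    _ = ENNReal.ofReal 2 * eLpNorm f 2 μ := Filter.liminf_const _
end
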